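/- Let Y ∈ ℝ^{m×n} (m ≤ n) have singular value decomposition Y = U·Diag(σ₁(Y), …, σ_m(Y))·Vᵀ and let λ > 0. Then the matrix D_λ(Y) = U·Diag(max(σ₁(Y) − λ/2, 0), …, max(σ_m(Y) − λ/2, 0))·Vᵀ is a global minimizer of the function X ↦ ‖X − Y‖_F² + λ‖X‖_* over X ∈ ℝ^{m×n}. -/

import Mathlib

open Matrix Filter

/-- The singular values of a real `m × n` matrix: square roots of the eigenvalues of `X * Xᵀ`. -/
noncomputable def sv {m n : ℕ} (X : Matrix (Fin m) (Fin n) ℝ) : Fin m → ℝ :=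
  fun i => Real.sqrt ((Matrix.isHermitian_mul_conjTranspose_self X).eigenvalues i)

/-- The singular values arranged in descending order: `svSorted X 0 ≥ svSorted X 1 ≥ ⋯`. -/
noncomputable def svSorted {m n : ℕ} (X : Matrix (Fin m) (Fin n) ℝ) : Fin m → ℝ :=
  fun i => sv X (Tuple.sort (sv X) i.rev)

/-- `P_a(X) = Σᵢ a σᵢ(X)/(a σᵢ(X) + 1)`. -/
noncomputable def Pa {m n : ℕ} (a : ℝ) (X : Matrix (Fin m) (Fin n) ℝ) : ℝ :=
  ∑ i, a * sv X i / (a * sv X i + 1)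

/-- Frobenius norm. -/
noncomputable def frobNorm {m n : ℕ} (X : Matrix (Fin m) (Fin n) ℝ) : ℝ :=
  Real.sqrt (∑ i, ∑ j, (X i j) ^ 2)

/-- Nuclear norm: the sum of the singular values. -/
noncomputable def nuclearNorm {m n : ℕ} (X : Matrix (Fin m) (Fin n) ℝ) : ℝ :=
  ∑ i, sv X i

/-- The rectangular `m × n` "diagonal" matrix with diagonal entries `σ`. -/
def diagRect {m n : ℕ} (σ : Fin m → ℝ) : Matrix (Fin m) (Fin n) ℝ :=
  Matrix.of fun i j => if (j : ℕ) = (i : ℕ) then σ i else 0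

/-- The `r`-restricted isometry constant `δ_r(𝒜)`. -/
noncomputable def ripConst {m n d : ℕ}
    (A : Matrix (Fin m) (Fin n) ℝ →ₗ[ℝ] EuclideanSpace ℝ (Fin d)) (r : ℕ) : ℝ :=
  sInf {δ : ℝ | 0 ≤ δ ∧ ∀ X : Matrix (Fin m) (Fin n) ℝ, X.rank ≤ r →
    (1 - δ) * frobNorm X ^ 2 ≤ ‖A X‖ ^ 2 ∧ ‖A X‖ ^ 2 ≤ (1 + δ) * frobNorm X ^ 2}

/-! ### Auxiliary lemmas -/

lemma svt_orth_entry {m : ℕ} {Q : Matrix (Fin m) (Fin m) ℝ} (h : Q * Qᵀ = 1) (i j : Fin m) :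
    (∑ l, Q i l * Q j l) = if i = j then (1:ℝ) else 0 := by
  have := congrFun (congrFun h i) j
  simpa [Matrix.mul_apply, Matrix.one_apply] using this

lemma svt_orth_entry' {m : ℕ} {Q : Matrix (Fin m) (Fin m) ℝ} (h : Qᵀ * Q = 1) (k k' : Fin m) :
    (∑ i, Q i k * Q i k') = if k = k' then (1:ℝ) else 0 := by
  have := congrFun (congrFun h k) k'
  simpa [Matrix.mul_apply, Matrix.one_apply] using this

lemma svt_sum_sq_orth {m : ℕ} {Q : Matrix (Fin m) (Fin m) ℝ} (hQQ : Q * Qᵀ = 1) (v : Fin m → ℝ) :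
    ∑ l, (∑ i, Q i l * v i) ^ 2 = ∑ i, v i ^ 2 := by
  have h1 : ∀ i j : Fin m, (∑ l, Q i l * Q j l) = if i = j then (1:ℝ) else 0 := svt_orth_entry hQQ
  calc ∑ l, (∑ i, Q i l * v i) ^ 2
      = ∑ l, ∑ i, ∑ j, (Q i l * v i) * (Q j l * v j) := by
        simp_rw [sq, Finset.sum_mul_sum]
    _ = ∑ i, ∑ j, (v i * v j) * ∑ l, Q i l * Q j l := by
        rw [Finset.sum_comm]
        refine Finset.sum_congr rfl fun i _ => ?_
        rw [Finset.sum_comm]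
        refine Finset.sum_congr rfl fun j _ => ?_
        rw [Finset.mul_sum]
        exact Finset.sum_congr rfl fun l _ => by ring
    _ = ∑ i, v i ^ 2 := by
        simp_rw [h1, mul_ite, mul_one, mul_zero, Finset.sum_ite_eq, Finset.mem_univ, if_true]
        exact Finset.sum_congr rfl fun i _ => by ring

lemma diagRect_apply {m n : ℕ} (σ : Fin m → ℝ) (i : Fin m) (j : Fin n) :
    diagRect σ i j = if (j : ℕ) = (i : ℕ) then σ i else 0 := rfl

lemma svt_sum_diagRect_mul {m n : ℕ} (hmn : m ≤ n) (a : Fin m → ℝ) (k : Fin m) (g : Fin n → ℝ) :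
    ∑ l : Fin n, (diagRect a : Matrix (Fin m) (Fin n) ℝ) k l * g l
      = a k * g (Fin.castLE hmn k) := by
  rw [Finset.sum_eq_single (Fin.castLE hmn k)]
  · simp [diagRect_apply]
  · intro l _ hl
    rw [diagRect_apply, if_neg, zero_mul]
    intro hval
    exact hl (Fin.ext (by simpa using hval))
  · simp

lemma svt_entry_UAV {m n : ℕ} (hmn : m ≤ n) (U : Matrix (Fin m) (Fin m) ℝ)
    (V : Matrix (Fin n) (Fin n) ℝ) (a : Fin m → ℝ) (i : Fin m) (j : Fin n) :
    (U * (diagRect a : Matrix (Fin m) (Fin n) ℝ) * Vᵀ) i j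
      = ∑ k, a k * (U i k * V j (Fin.castLE hmn k)) := by
  rw [Matrix.mul_apply]
  have : ∀ l, (U * (diagRect a : Matrix (Fin m) (Fin n) ℝ)) i l
      = ∑ k, U i k * diagRect a k l := fun l => Matrix.mul_apply
  simp_rw [this, Matrix.transpose_apply, Finset.sum_mul]
  rw [Finset.sum_comm]
  refine Finset.sum_congr rfl fun k _ => ?_
  have := svt_sum_diagRect_mul hmn a k (fun l => V j l)
  calc ∑ l, U i k * diagRect a k l * V j l = U i k * ∑ l, diagRect a k l * V j l := by
        rw [Finset.mul_sum]; exact Finset.sum_congr rfl fun l _ => by ring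
    _ = a k * (U i k * V j (Fin.castLE hmn k)) := by rw [this]; ring

lemma svt_diagRect_mul_transpose {m n : ℕ} (hmn : m ≤ n) (a b : Fin m → ℝ) :
    (diagRect a : Matrix (Fin m) (Fin n) ℝ) * (diagRect b : Matrix (Fin m) (Fin n) ℝ)ᵀ
      = Matrix.diagonal (fun i => a i * b i) := by
  ext i j
  rw [Matrix.mul_apply]
  simp_rw [Matrix.transpose_apply]
  have := svt_sum_diagRect_mul hmn a i (fun l => diagRect b j l)
  rw [this, diagRect_apply]
  rcases eq_or_ne i j with h | h
  · subst h; simp [Matrix.diagonal_apply]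
  · rw [Matrix.diagonal_apply_ne _ h, if_neg, mul_zero]
    simp only [Fin.coe_castLE]
    intro hval
    exact h (Fin.ext hval)

/-- If `A = Q diag(d) Qᵀ` with `Q` orthogonal, then for any `f`,
`∑ f(eigenvalues) = ∑ f(d)`. -/
lemma svt_sum_f_eigenvalues {m : ℕ} (d : Fin m → ℝ) (Q : Matrix (Fin m) (Fin m) ℝ)
    (hQ : Qᵀ * Q = 1) {A : Matrix (Fin m) (Fin m) ℝ}
    (hAeq : A = Q * Matrix.diagonal d * Qᵀ) (hA : A.IsHermitian) (f : ℝ → ℝ) :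
    ∑ k, f (hA.eigenvalues k) = ∑ i, f (d i) := by
  have hQ2 : Q * Qᵀ = 1 := mul_eq_one_comm.mp hQ
  set R : Matrix (Fin m) (Fin m) ℝ := (hA.eigenvectorUnitary : Matrix (Fin m) (Fin m) ℝ) with hR
  have hspec : A = R * Matrix.diagonal hA.eigenvalues * Rᵀ := by
    have h := hA.spectral_theorem
    simpa [Matrix.star_eq_conjTranspose, Matrix.conjTranspose_eq_transpose_of_trivial] using h
  have hR1 : Rᵀ * R = 1 := by
    have := hA.eigenvectorUnitary.2
    rw [Matrix.mem_unitaryGroup_iff'] at this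
    simpa [Matrix.star_eq_conjTranspose, Matrix.conjTranspose_eq_transpose_of_trivial] using this
  set S : Matrix (Fin m) (Fin m) ℝ := Qᵀ * R with hS
  have hS1 : Sᵀ * S = 1 := by
    rw [hS, Matrix.transpose_mul, Matrix.transpose_transpose, mul_assoc, ← mul_assoc Q, hQ2,
      one_mul, hR1]
  have hS2 : S * Sᵀ = 1 := mul_eq_one_comm.mp hS1
  have hcomm : Matrix.diagonal d * S = S * Matrix.diagonal hA.eigenvalues := by
    have h1 : Q * Matrix.diagonal d * Qᵀ = R * Matrix.diagonal hA.eigenvalues * Rᵀ :=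
      hAeq ▸ hspec
    calc Matrix.diagonal d * S = Qᵀ * (Q * Matrix.diagonal d * Qᵀ) * R := by
          rw [hS]; rw [← mul_assoc, ← mul_assoc, ← mul_assoc, hQ, one_mul]
      _ = Qᵀ * (R * Matrix.diagonal hA.eigenvalues * Rᵀ) * R := by rw [h1]
      _ = S * Matrix.diagonal hA.eigenvalues := by
          rw [hS]; simp only [Matrix.mul_assoc]; rw [hR1, Matrix.mul_one]
  have hentry : ∀ i k, d i * S i k = S i k * hA.eigenvalues k := by
    intro i k
    have := congrFun (congrFun hcomm i) k
    simpa [Matrix.mul_apply, Matrix.diagonal_apply, Finset.sum_ite_eq, Finset.sum_ite_eq']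
      using this
  have hfe : ∀ i k, S i k ^ 2 * f (d i) = S i k ^ 2 * f (hA.eigenvalues k) := by
    intro i k
    rcases eq_or_ne (S i k) 0 with h | h
    · simp [h]
    · have h0 : (d i - hA.eigenvalues k) * S i k = 0 := by
        have h := hentry i k; ring_nf at h ⊢; linarith
      rcases mul_eq_zero.mp h0 with h' | h'
      · rw [sub_eq_zero.mp h']
      · exact absurd h' h
  have hcol : ∀ k, ∑ i, S i k ^ 2 = 1 := by
    intro k
    have := svt_orth_entry' hS1 k k
    simpa [sq] using this
  have hrow : ∀ i, ∑ k, S i k ^ 2 = 1 := by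
    intro i
    have := svt_orth_entry hS2 i i
    simpa [sq] using this
  calc ∑ k, f (hA.eigenvalues k) = ∑ k, (∑ i, S i k ^ 2) * f (hA.eigenvalues k) := by
        simp [hcol]
    _ = ∑ k, ∑ i, S i k ^ 2 * f (hA.eigenvalues k) := by simp [Finset.sum_mul]
    _ = ∑ i, ∑ k, S i k ^ 2 * f (d i) := by
        rw [Finset.sum_comm]
        exact Finset.sum_congr rfl fun i _ => Finset.sum_congr rfl fun k _ => (hfe i k).symm
    _ = ∑ i, f (d i) := by
        refine Finset.sum_congr rfl fun i _ => ?_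
        rw [← Finset.sum_mul, hrow, one_mul]

/-- Key: `⟨X, W⟩ ≤ b ‖X‖₊` whenever `vᵀ W y ≤ b ‖v‖ ‖y‖` for all `v, y`. -/
lemma svt_key_ineq {m n : ℕ} (X W : Matrix (Fin m) (Fin n) ℝ) (b : ℝ)
    (hW : ∀ (v : Fin m → ℝ) (y : Fin n → ℝ),
      (∑ i, ∑ j, v i * W i j * y j)
        ≤ b * (Real.sqrt (∑ i, v i ^ 2) * Real.sqrt (∑ j, y j ^ 2))) :
    ∑ i, ∑ j, X i j * W i j ≤ b * nuclearNorm X := by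
  set hA := Matrix.isHermitian_mul_conjTranspose_self X with hhA
  set Q : Matrix (Fin m) (Fin m) ℝ := (hA.eigenvectorUnitary : Matrix (Fin m) (Fin m) ℝ)
    with hQdef
  have hQ1 : Qᵀ * Q = 1 := by
    have := hA.eigenvectorUnitary.2
    rw [Matrix.mem_unitaryGroup_iff'] at this
    simp [Matrix.star_eq_conjTranspose, Matrix.conjTranspose_eq_transpose_of_trivial] at this
    exact this
  have hQ2 : Q * Qᵀ = 1 := mul_eq_one_comm.mp hQ1
  have hdiag : Qᵀ * (X * Xᴴ) * Q = Matrix.diagonal hA.eigenvalues := by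
    have h := Matrix.IsHermitian.conjStarAlgAut_star_eigenvectorUnitary hA
    simp only [Unitary.conjStarAlgAut_apply] at h
    simp [Matrix.star_eq_conjTranspose, Matrix.conjTranspose_eq_transpose_of_trivial] at h
    exact h
  set y : Fin m → Fin n → ℝ := fun k j => ∑ p, Q p k * X p j with hy
  have hynorm : ∀ k, ∑ j, y k j ^ 2 = hA.eigenvalues k := by
    intro k
    have hXXT : ∀ p q, (X * Xᴴ) p q = ∑ j, X p j * X q j := by
      intro p q
      simp [Matrix.mul_apply, Matrix.conjTranspose_apply]
    calc ∑ j, y k j ^ 2 = ∑ j, (∑ p, Q p k * X p j) * (∑ q, Q q k * X q j) := by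
          simp [hy, sq]
      _ = ∑ p, ∑ q, Q p k * Q q k * (∑ j, X p j * X q j) := by
          simp_rw [Finset.sum_mul_sum, Finset.mul_sum]
          rw [Finset.sum_comm]
          refine Finset.sum_congr rfl fun p _ => ?_
          rw [Finset.sum_comm]
          refine Finset.sum_congr rfl fun q _ => Finset.sum_congr rfl fun j _ => by ring
      _ = (Qᵀ * (X * Xᴴ) * Q) k k := by
          have h3 : (Qᵀ * (X * Xᴴ) * Q) k k = ∑ q, ∑ p, Q p k * (X * Xᴴ) p q * Q q k := by
            rw [Matrix.mul_apply]
            refine Finset.sum_congr rfl fun q _ => ?_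
            rw [Matrix.mul_apply, Finset.sum_mul]
            exact Finset.sum_congr rfl fun p _ => by rw [Matrix.transpose_apply]
          rw [h3, Finset.sum_comm]
          refine Finset.sum_congr rfl fun p _ => Finset.sum_congr rfl fun q _ => ?_
          rw [hXXT]; ring
      _ = hA.eigenvalues k := by rw [hdiag]; simp
  have hdecomp : ∀ i j, X i j = ∑ k, Q i k * y k j := by
    intro i j
    have h := svt_orth_entry hQ2
    calc X i j = ∑ p, (if i = p then (1:ℝ) else 0) * X p j := by simp
      _ = ∑ p, (∑ k, Q i k * Q p k) * X p j := by
          refine Finset.sum_congr rfl fun p _ => by rw [h i p]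
      _ = ∑ k, Q i k * y k j := by
          simp_rw [hy, Finset.sum_mul, Finset.mul_sum]
          rw [Finset.sum_comm]
          exact Finset.sum_congr rfl fun p _ => Finset.sum_congr rfl fun k _ => by ring
  have hQcol : ∀ k, ∑ i, Q i k ^ 2 = 1 := by
    intro k
    have := svt_orth_entry' hQ1 k k
    simpa [sq] using this
  calc ∑ i, ∑ j, X i j * W i j
      = ∑ i, ∑ j, ∑ k, Q i k * y k j * W i j := by
        refine Finset.sum_congr rfl fun i _ => Finset.sum_congr rfl fun j _ => ?_
        rw [hdecomp i j, Finset.sum_mul]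
    _ = ∑ i, ∑ k, ∑ j, Q i k * y k j * W i j := by
        exact Finset.sum_congr rfl fun i _ => Finset.sum_comm
    _ = ∑ k, ∑ i, ∑ j, Q i k * W i j * y k j := by
        rw [Finset.sum_comm]
        exact Finset.sum_congr rfl fun k _ => Finset.sum_congr rfl fun i _ =>
          Finset.sum_congr rfl fun j _ => by ring
    _ ≤ ∑ k, b * (Real.sqrt (∑ i, Q i k ^ 2) * Real.sqrt (∑ j, y k j ^ 2)) := by
        exact Finset.sum_le_sum fun k _ => hW (fun i => Q i k) (y k)
    _ = b * nuclearNorm X := by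
        rw [nuclearNorm, Finset.mul_sum]
        refine Finset.sum_congr rfl fun k _ => ?_
        rw [hQcol, hynorm, Real.sqrt_one, one_mul]
        rfl

/-- Operator-norm type bound for `U * diagRect e * Vᵀ` with `0 ≤ e ≤ b`. -/
lemma svt_bound_UAV {m n : ℕ} (hmn : m ≤ n) (U : Matrix (Fin m) (Fin m) ℝ)
    (V : Matrix (Fin n) (Fin n) ℝ) (hUU : U * Uᵀ = 1) (hVV : V * Vᵀ = 1)
    (e : Fin m → ℝ) (b : ℝ) (he0 : ∀ i, 0 ≤ e i) (heb : ∀ i, e i ≤ b) (hb : 0 ≤ b)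
    (v : Fin m → ℝ) (y : Fin n → ℝ) :
    ∑ i, ∑ j, v i * (U * (diagRect e : Matrix (Fin m) (Fin n) ℝ) * Vᵀ) i j * y j
      ≤ b * (Real.sqrt (∑ i, v i ^ 2) * Real.sqrt (∑ j, y j ^ 2)) := by
  set a : Fin m → ℝ := fun k => ∑ i, U i k * v i with ha
  set c : Fin n → ℝ := fun l => ∑ j, V j l * y j with hc
  have hstep : ∑ i, ∑ j, v i * (U * (diagRect e : Matrix (Fin m) (Fin n) ℝ) * Vᵀ) i j * y j
      = ∑ k, e k * (a k * c (Fin.castLE hmn k)) := by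
    calc ∑ i, ∑ j, v i * (U * (diagRect e : Matrix (Fin m) (Fin n) ℝ) * Vᵀ) i j * y j
        = ∑ i, ∑ j, ∑ k, e k * ((U i k * v i) * (V j (Fin.castLE hmn k) * y j)) := by
          refine Finset.sum_congr rfl fun i _ => Finset.sum_congr rfl fun j _ => ?_
          rw [svt_entry_UAV hmn U V e i j, Finset.mul_sum, Finset.sum_mul]
          exact Finset.sum_congr rfl fun k _ => by ring
      _ = ∑ k, ∑ i, ∑ j, e k * ((U i k * v i) * (V j (Fin.castLE hmn k) * y j)) := by
          rw [show (∑ i, ∑ j, ∑ k, e k * ((U i k * v i) * (V j (Fin.castLE hmn k) * y j)))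
              = ∑ i, ∑ k, ∑ j, e k * ((U i k * v i) * (V j (Fin.castLE hmn k) * y j)) from
            Finset.sum_congr rfl fun i _ => Finset.sum_comm]
          exact Finset.sum_comm
      _ = ∑ k, e k * (a k * c (Fin.castLE hmn k)) := by
          refine Finset.sum_congr rfl fun k _ => ?_
          simp only [ha, hc]
          rw [Finset.sum_mul_sum, Finset.mul_sum]
          refine Finset.sum_congr rfl fun i _ => ?_
          rw [Finset.mul_sum]
  rw [hstep]
  have habs : ∑ k, e k * (a k * c (Fin.castLE hmn k))
      ≤ b * ∑ k, |a k| * |c (Fin.castLE hmn k)| := by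
    rw [Finset.mul_sum]
    refine Finset.sum_le_sum fun k _ => ?_
    calc e k * (a k * c (Fin.castLE hmn k)) ≤ e k * |a k * c (Fin.castLE hmn k)| :=
          mul_le_mul_of_nonneg_left (le_abs_self _) (he0 k)
      _ ≤ b * |a k * c (Fin.castLE hmn k)| :=
          mul_le_mul_of_nonneg_right (heb k) (abs_nonneg _)
      _ = b * (|a k| * |c (Fin.castLE hmn k)|) := by rw [abs_mul]
  have hcs : ∑ k, |a k| * |c (Fin.castLE hmn k)|
      ≤ Real.sqrt (∑ k, |a k| ^ 2) * Real.sqrt (∑ k, |c (Fin.castLE hmn k)| ^ 2) :=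
    Real.sum_mul_le_sqrt_mul_sqrt _ _ _
  have hA : ∑ k, |a k| ^ 2 = ∑ i, v i ^ 2 := by
    simp_rw [sq_abs]
    exact svt_sum_sq_orth hUU v
  have hC : ∑ k, |c (Fin.castLE hmn k)| ^ 2 ≤ ∑ j, y j ^ 2 := by
    simp_rw [sq_abs]
    have h1 : ∑ k : Fin m, c (Fin.castLE hmn k) ^ 2
        = ∑ l ∈ Finset.univ.map (Fin.castLEEmb hmn), c l ^ 2 := by
      rw [Finset.sum_map]
      rfl
    rw [h1]
    calc ∑ l ∈ Finset.univ.map (Fin.castLEEmb hmn), c l ^ 2 ≤ ∑ l : Fin n, c l ^ 2 :=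
          Finset.sum_le_sum_of_subset_of_nonneg (Finset.subset_univ _)
            (fun l _ _ => sq_nonneg _)
      _ = ∑ j, y j ^ 2 := svt_sum_sq_orth hVV y
  have hfinal : Real.sqrt (∑ k, |a k| ^ 2) * Real.sqrt (∑ k, |c (Fin.castLE hmn k)| ^ 2)
      ≤ Real.sqrt (∑ i, v i ^ 2) * Real.sqrt (∑ j, y j ^ 2) := by
    rw [hA]
    exact mul_le_mul_of_nonneg_left (Real.sqrt_le_sqrt hC) (Real.sqrt_nonneg _)
  calc ∑ k, e k * (a k * c (Fin.castLE hmn k))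
      ≤ b * ∑ k, |a k| * |c (Fin.castLE hmn k)| := habs
    _ ≤ b * (Real.sqrt (∑ k, |a k| ^ 2) * Real.sqrt (∑ k, |c (Fin.castLE hmn k)| ^ 2)) :=
        mul_le_mul_of_nonneg_left hcs hb
    _ ≤ b * (Real.sqrt (∑ i, v i ^ 2) * Real.sqrt (∑ j, y j ^ 2)) :=
        mul_le_mul_of_nonneg_left hfinal hb

lemma svt_ip_eq_trace {m n : ℕ} (A B : Matrix (Fin m) (Fin n) ℝ) :
    ∑ i, ∑ j, A i j * B i j = Matrix.trace (A * Bᵀ) := by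
  simp [Matrix.trace, Matrix.diag, Matrix.mul_apply]

theorem statement16 (m n : ℕ) (hmn : m ≤ n) (lam : ℝ) (hlam : 0 < lam)
    (Y : Matrix (Fin m) (Fin n) ℝ)
    (U : Matrix (Fin m) (Fin m) ℝ) (V : Matrix (Fin n) (Fin n) ℝ)
    (hU : Uᵀ * U = 1) (hV : Vᵀ * V = 1)
    (hSVD : Y = U * diagRect (svSorted Y) * Vᵀ) :
    ∀ X : Matrix (Fin m) (Fin n) ℝ,
      frobNorm (U * diagRect (fun i => max (svSorted Y i - lam / 2) 0) * Vᵀ - Y) ^ 2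
          + lam * nuclearNorm (U * diagRect (fun i => max (svSorted Y i - lam / 2) 0) * Vᵀ)
        ≤ frobNorm (X - Y) ^ 2 + lam * nuclearNorm X := by
  intro X
  have hUU : U * Uᵀ = 1 := mul_eq_one_comm.mp hU
  have hVV : V * Vᵀ = 1 := mul_eq_one_comm.mp hV
  set σ : Fin m → ℝ := svSorted Y with hσdef
  have hσ0 : ∀ i, 0 ≤ σ i := fun i => Real.sqrt_nonneg _
  set τ : Fin m → ℝ := fun i => max (σ i - lam / 2) 0 with hτdef
  set D : Matrix (Fin m) (Fin n) ℝ := U * diagRect τ * Vᵀ with hDdef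
  set e : Fin m → ℝ := fun i => min (σ i) (lam / 2) with hedef
  have hτ0 : ∀ i, 0 ≤ τ i := fun i => le_max_right _ _
  have hτ_e : ∀ i, σ i - τ i = e i := by
    intro i
    rw [hτdef, hedef]
    dsimp only
    rcases le_total (σ i) (lam / 2) with h | h
    · rw [max_eq_right (by linarith), min_eq_left h, sub_zero]
    · rw [max_eq_left (by linarith), min_eq_right h]; ring
  have he0 : ∀ i, 0 ≤ e i := by
    intro i; rw [hedef]; dsimp only; exact le_min (hσ0 i) (by linarith)
  have heb : ∀ i, e i ≤ lam / 2 := by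
    intro i; rw [hedef]; dsimp only; exact min_le_right _ _
  have hτe : ∀ k, τ k * e k = lam / 2 * τ k := by
    intro k
    rcases le_total (σ k) (lam / 2) with h | h
    · have : τ k = 0 := by rw [hτdef]; dsimp only; exact max_eq_right (by linarith)
      rw [this]; ring
    · have : e k = lam / 2 := by rw [hedef]; dsimp only; exact min_eq_right h
      rw [this]; ring
  have hdd : (diagRect σ : Matrix (Fin m) (Fin n) ℝ) - diagRect τ = diagRect e := by
    ext i j
    simp only [Matrix.sub_apply, diagRect_apply]
    split_ifs
    · exact hτ_e i
    · simp
  have hG : Y - D = U * (diagRect e : Matrix (Fin m) (Fin n) ℝ) * Vᵀ := by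
    conv_lhs => rw [hSVD, hDdef]
    show U * (diagRect σ : Matrix (Fin m) (Fin n) ℝ) * Vᵀ - U * (diagRect τ : Matrix (Fin m) (Fin n) ℝ) * Vᵀ = _
    rw [← Matrix.sub_mul, ← Matrix.mul_sub, hdd]
  have hfrob : ∀ Z : Matrix (Fin m) (Fin n) ℝ, frobNorm Z ^ 2 = ∑ i, ∑ j, Z i j ^ 2 := by
    intro Z
    rw [frobNorm]
    exact Real.sq_sqrt (Finset.sum_nonneg fun i _ => Finset.sum_nonneg fun j _ => sq_nonneg _)
  -- nuclear norm of D
  have hDDT : D * Dᴴ = U * Matrix.diagonal (fun i => τ i * τ i) * Uᵀ := by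
    rw [hDdef, Matrix.conjTranspose_eq_transpose_of_trivial]
    show U * (diagRect τ : Matrix (Fin m) (Fin n) ℝ) * Vᵀ * (U * (diagRect τ : Matrix (Fin m) (Fin n) ℝ) * Vᵀ)ᵀ = _
    rw [Matrix.transpose_mul,
      Matrix.transpose_mul, Matrix.transpose_transpose]
    have hcol : Vᵀ * (V * ((diagRect τ : Matrix (Fin m) (Fin n) ℝ)ᵀ * Uᵀ))
        = (diagRect τ : Matrix (Fin m) (Fin n) ℝ)ᵀ * Uᵀ := by
      rw [← Matrix.mul_assoc, hV, Matrix.one_mul]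
    simp only [Matrix.mul_assoc]
    rw [hcol, ← Matrix.mul_assoc (diagRect τ), svt_diagRect_mul_transpose hmn τ τ]
  have hNND : nuclearNorm D = ∑ i, τ i := by
    have h := svt_sum_f_eigenvalues (fun i => τ i * τ i) U hU hDDT
      (Matrix.isHermitian_mul_conjTranspose_self D) Real.sqrt
    calc nuclearNorm D
        = ∑ k, Real.sqrt ((Matrix.isHermitian_mul_conjTranspose_self D).eigenvalues k) := rfl
      _ = ∑ i, Real.sqrt (τ i * τ i) := h
      _ = ∑ i, τ i := Finset.sum_congr rfl fun i _ => Real.sqrt_mul_self (hτ0 i)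
  -- inner product of D with Y - D
  have hDG : ∑ i, ∑ j, D i j * (Y - D) i j = lam / 2 * ∑ i, τ i := by
    rw [svt_ip_eq_trace, hG, hDdef]
    show Matrix.trace (U * (diagRect τ : Matrix (Fin m) (Fin n) ℝ) * Vᵀ * (U * (diagRect e : Matrix (Fin m) (Fin n) ℝ) * Vᵀ)ᵀ) = _
    rw [Matrix.transpose_mul, Matrix.transpose_mul, Matrix.transpose_transpose]
    have hcol : Vᵀ * (V * ((diagRect e : Matrix (Fin m) (Fin n) ℝ)ᵀ * Uᵀ))
        = (diagRect e : Matrix (Fin m) (Fin n) ℝ)ᵀ * Uᵀ := by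
      rw [← Matrix.mul_assoc, hV, Matrix.one_mul]
    simp only [Matrix.mul_assoc]
    rw [hcol, ← Matrix.mul_assoc (diagRect τ), svt_diagRect_mul_transpose hmn τ e]
    rw [← Matrix.mul_assoc, Matrix.trace_mul_comm, ← Matrix.mul_assoc, hU, Matrix.one_mul,
      Matrix.trace_diagonal]
    simp_rw [hτe]
    rw [← Finset.mul_sum]
  -- key inequality for X
  have hkey : ∑ i, ∑ j, X i j * (Y - D) i j ≤ lam / 2 * nuclearNorm X := by
    rw [hG]
    exact svt_key_ineq X _ (lam / 2)
      (fun v y => svt_bound_UAV hmn U V hUU hVV e (lam / 2) he0 heb (by linarith) v y)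
  -- pointwise quadratic inequality
  have hmain : ∑ i, ∑ j, (D - Y) i j ^ 2
      ≤ (∑ i, ∑ j, (X - Y) i j ^ 2) + 2 * (∑ i, ∑ j, X i j * (Y - D) i j)
        - 2 * (∑ i, ∑ j, D i j * (Y - D) i j) := by
    have hpt : ∀ i j, (D - Y) i j ^ 2
        ≤ (X - Y) i j ^ 2 + 2 * (X i j * (Y - D) i j) - 2 * (D i j * (Y - D) i j) := by
      intro i j
      simp only [Matrix.sub_apply]
      nlinarith [sq_nonneg (X i j - D i j)]
    calc ∑ i, ∑ j, (D - Y) i j ^ 2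
        ≤ ∑ i, ∑ j, ((X - Y) i j ^ 2 + 2 * (X i j * (Y - D) i j)
            - 2 * (D i j * (Y - D) i j)) :=
          Finset.sum_le_sum fun i _ => Finset.sum_le_sum fun j _ => hpt i j
      _ = (∑ i, ∑ j, (X - Y) i j ^ 2) + 2 * (∑ i, ∑ j, X i j * (Y - D) i j)
            - 2 * (∑ i, ∑ j, D i j * (Y - D) i j) := by
          simp only [Finset.sum_sub_distrib, Finset.sum_add_distrib, ← Finset.mul_sum]
  rw [hfrob, hfrob]
  have hNND' : lam / 2 * ∑ i, τ i = lam / 2 * nuclearNorm D := by rw [hNND]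
  linarith [hmain, hkey, hDG, hNND']
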